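/- There exists a constant C > 0 such that for all integers T, j, t with 2 ≤ j ≤ t ≤ T and j − 1 ≤ T/2, one has (t/T)^j − ((t−1)/T)^j − j·∏_{s=1}^{j−1}(t−s) / ∏_{s=1}^{j}(T+1−s) ≥ −C·j^3/T^2. -/

import Mathlib

/-- Lower-bound Bernoulli-type inequality: `(a+h)^(m+1) ≥ a^(m+1) + (m+1) a^m h`. -/
lemma aux_pow_add_lb (a h : ℝ) (ha : 0 ≤ a) (hh : 0 ≤ h) (m : ℕ) :
    a ^ (m + 1) + ((m : ℝ) + 1) * a ^ m * h ≤ (a + h) ^ (m + 1) := by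
  induction m with
  | zero => simp
  | succ n ih =>
    have h1 : (0:ℝ) ≤ a ^ n := pow_nonneg ha n
    have h2 : (0:ℝ) ≤ a ^ (n+1) := pow_nonneg ha (n+1)
    have h3 : (0:ℝ) ≤ (a + h) ^ (n+1) := pow_nonneg (by linarith) (n+1)
    have key : (a + h) ^ (n + 1 + 1) = (a + h) * (a + h) ^ (n + 1) := by ring
    have step : (a + h) * (a ^ (n+1) + ((n:ℝ) + 1) * a ^ n * h)
        ≤ (a + h) * (a + h) ^ (n + 1) := by
      have := mul_le_mul_of_nonneg_left ih (by linarith : (0:ℝ) ≤ a + h)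
      linarith
    have expand : a ^ (n + 1 + 1) + ((n:ℝ) + 1 + 1) * a ^ (n+1) * h
        ≤ (a + h) * (a ^ (n+1) + ((n:ℝ) + 1) * a ^ n * h) := by
      have hid : (a + h) * (a ^ (n+1) + ((n:ℝ) + 1) * a ^ n * h)
          = a ^ (n + 1 + 1) + ((n:ℝ) + 1 + 1) * a ^ (n+1) * h
            + ((n:ℝ) + 1) * a ^ n * h ^ 2 := by ring
      have hnn : 0 ≤ ((n:ℝ) + 1) * a ^ n * h ^ 2 := by positivity
      linarith
    push_cast
    push_cast at expand step
    linarith [key ▸ step]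

/-- Upper bound: for `0 ≤ y ≤ x ≤ 1`, `x^n ≤ y^n + n (x - y)`. -/
lemma aux_pow_sub_ub (x y : ℝ) (hy : 0 ≤ y) (hyx : y ≤ x) (hx : x ≤ 1) (n : ℕ) :
    x ^ n ≤ y ^ n + (n : ℝ) * (x - y) := by
  induction n with
  | zero => simp
  | succ n ih =>
    have hx0 : 0 ≤ x := le_trans hy hyx
    have hyn : y ^ n ≤ 1 := pow_le_one₀ hy (le_trans hyx hx)
    have hyn0 : 0 ≤ y ^ n := pow_nonneg hy n
    have hx' : x ^ (n+1) = x * x ^ n := by ring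
    have hy' : y ^ (n+1) = y * y ^ n := by ring
    have e1 : x * x ^ n ≤ x * (y ^ n + (n:ℝ) * (x - y)) :=
      mul_le_mul_of_nonneg_left ih hx0
    have e2 : x * (y ^ n + (n:ℝ) * (x - y))
        = y * y ^ n + (x - y) * y ^ n + (n:ℝ) * (x - y)
          - (n:ℝ) * (x - y) * (1 - x) := by ring
    have e3 : (x - y) * y ^ n ≤ (x - y) * 1 :=
      mul_le_mul_of_nonneg_left hyn (sub_nonneg.mpr hyx)
    have e4 : 0 ≤ (n:ℝ) * (x - y) * (1 - x) := by
      apply mul_nonneg (mul_nonneg (Nat.cast_nonneg n) (sub_nonneg.mpr hyx))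
      linarith
    push_cast
    linarith

theorem pwm_weight_difference_lower_bound :
    ∃ C : ℝ, 0 < C ∧ ∀ T j t : ℕ, 2 ≤ j → j ≤ t → t ≤ T → ((j : ℝ) - 1) ≤ (T : ℝ) / 2 →
      -C * (j : ℝ) ^ 3 / (T : ℝ) ^ 2
        ≤ ((t : ℝ) / T) ^ j - (((t : ℝ) - 1) / T) ^ j
          - (j : ℝ) * (∏ s ∈ Finset.Icc 1 (j - 1), ((t : ℝ) - (s : ℝ)))
              / (∏ s ∈ Finset.Icc 1 j, ((T : ℝ) + 1 - (s : ℝ))) := by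
  refine ⟨1, one_pos, fun T j t hj hjt htT _ => ?_⟩
  -- basic positivity facts
  have hT2 : 2 ≤ T := le_trans hj (le_trans hjt htT)
  have hTR : (0:ℝ) < T := by positivity
  have hjR : (0:ℝ) < j := by positivity
  set m : ℕ := j - 1 with hm
  have hjm : j = m + 1 := by omega
  have hm1 : 1 ≤ m := by omega
  -- rewrite the two products over ranges
  have hIcc1 : Finset.Icc 1 (j-1) = Finset.Ico 1 m.succ := by
    rw [Nat.succ_eq_add_one, Finset.Ico_add_one_right_eq_Icc]
  have hIcc2 : Finset.Icc 1 j = Finset.Ico 1 j.succ := by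
    rw [Nat.succ_eq_add_one, Finset.Ico_add_one_right_eq_Icc]
  have hN : (∏ s ∈ Finset.Icc 1 (j - 1), ((t : ℝ) - (s : ℝ)))
      = ∏ i ∈ Finset.range m, ((t : ℝ) - 1 - i) := by
    rw [hIcc1, Finset.prod_Ico_eq_prod_range]
    apply Finset.prod_congr (by simp)
    intro i _; push_cast; ring
  have hD : (∏ s ∈ Finset.Icc 1 j, ((T : ℝ) + 1 - (s : ℝ)))
      = (T : ℝ) * ∏ i ∈ Finset.range m, ((T : ℝ) - 1 - i) := by
    rw [hIcc2, Finset.prod_Ico_eq_prod_range]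
    have : j + 1 - 1 = m + 1 := by omega
    rw [this]
    have e : ∀ k : ℕ, (T:ℝ) + 1 - (↑(1 + k) : ℝ) = (T:ℝ) - k := by
      intro k; push_cast; ring
    simp only [e]
    rw [Finset.prod_range_succ' (fun k => (T:ℝ) - k)]
    simp only [Nat.cast_zero, Nat.cast_add, Nat.cast_one, sub_zero]
    rw [mul_comm]
    congr 1
    apply Finset.prod_congr rfl
    intro i _; ring
  -- positivity of factors
  have hfacT : ∀ i ∈ Finset.range m, (0:ℝ) < (T : ℝ) - 1 - i := by
    intro i hi
    have : i + 2 ≤ T := by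
      have := Finset.mem_range.mp hi; omega
    have : (i : ℝ) + 2 ≤ (T : ℝ) := by exact_mod_cast this
    linarith
  have hfact : ∀ i ∈ Finset.range m, (0:ℝ) ≤ (t : ℝ) - 1 - i := by
    intro i hi
    have : i + 1 ≤ t := by
      have := Finset.mem_range.mp hi; omega
    have : (i : ℝ) + 1 ≤ (t : ℝ) := by exact_mod_cast this
    linarith
  have hDm_pos : (0:ℝ) < ∏ i ∈ Finset.range m, ((T : ℝ) - 1 - i) :=
    Finset.prod_pos hfacT
  -- the ratio product bound
  have htTR : (t : ℝ) ≤ (T : ℝ) := by exact_mod_cast htT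
  have hProd : (∏ i ∈ Finset.range m, ((t : ℝ) - 1 - i))
      / (∏ i ∈ Finset.range m, ((T : ℝ) - 1 - i)) ≤ ((t : ℝ) / T) ^ m := by
    rw [← Finset.prod_div_distrib]
    calc (∏ i ∈ Finset.range m, ((t : ℝ) - 1 - i) / ((T : ℝ) - 1 - i))
        ≤ ∏ _i ∈ Finset.range m, ((t : ℝ) / T) := by
          apply Finset.prod_le_prod
          · intro i hi
            exact div_nonneg (hfact i hi) (le_of_lt (hfacT i hi))
          · intro i hi
            rw [div_le_div_iff₀ (hfacT i hi) hTR]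
            have hi' : (0:ℝ) ≤ (i:ℝ) + 1 := by positivity
            nlinarith
      _ = ((t : ℝ) / T) ^ m := by rw [Finset.prod_const, Finset.card_range]
  -- abbreviations
  set x : ℝ := (t : ℝ) / T with hx
  set y : ℝ := ((t : ℝ) - 1) / T with hy
  have hxy : x = y + 1 / T := by
    rw [hx, hy, ← add_div, sub_add_cancel]
  have hy0 : 0 ≤ y := by
    have : (1:ℝ) ≤ (t:ℝ) := by exact_mod_cast (le_trans (by omega : 1 ≤ j) hjt)
    apply div_nonneg (by linarith) (le_of_lt hTR)
  have hx1 : x ≤ 1 := by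
    rw [hx, div_le_one hTR]; exact htTR
  have hyx : y ≤ x := by
    rw [hxy]
    have : (0:ℝ) ≤ 1 / T := by positivity
    linarith
  -- lower bound on the power difference
  have hlow : (j : ℝ) * y ^ m * (1 / T) ≤ x ^ j - y ^ j := by
    have := aux_pow_add_lb y (1/T) hy0 (by positivity) m
    rw [hjm]
    push_cast
    rw [hxy]
    push_cast at this
    linarith
  -- upper bound on the weight term
  have hub : (j : ℝ) * (∏ s ∈ Finset.Icc 1 (j - 1), ((t : ℝ) - (s : ℝ)))
      / (∏ s ∈ Finset.Icc 1 j, ((T : ℝ) + 1 - (s : ℝ)))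
      ≤ (j : ℝ) / T * (y ^ m + (m : ℝ) * (1 / T)) := by
    rw [hN, hD]
    have h1 : (j : ℝ) * (∏ i ∈ Finset.range m, ((t : ℝ) - 1 - i))
        / ((T:ℝ) * ∏ i ∈ Finset.range m, ((T : ℝ) - 1 - i))
        = (j : ℝ) / T * ((∏ i ∈ Finset.range m, ((t : ℝ) - 1 - i))
          / (∏ i ∈ Finset.range m, ((T : ℝ) - 1 - i))) := by
      field_simp
    rw [h1]
    refine mul_le_mul_of_nonneg_left ?_ (by positivity)
    calc (∏ i ∈ Finset.range m, ((t : ℝ) - 1 - i))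
          / (∏ i ∈ Finset.range m, ((T : ℝ) - 1 - i)) ≤ x ^ m := hProd
      _ ≤ y ^ m + (m : ℝ) * (x - y) := aux_pow_sub_ub x y hy0 hyx hx1 m
      _ = y ^ m + (m : ℝ) * (1 / T) := by rw [hxy]; ring
  -- combine
  have hmj : (m : ℝ) ≤ (j : ℝ) := by exact_mod_cast (by omega : m ≤ j)
  have hj1 : (1:ℝ) ≤ (j : ℝ) := by exact_mod_cast (by omega : 1 ≤ j)
  have hT1 : (1:ℝ) ≤ (T:ℝ) := by exact_mod_cast (by omega : 1 ≤ T)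
  have hjm3 : (j:ℝ) * (m:ℝ) ≤ (j:ℝ)^3 := by
    have h2 : (j:ℝ) * (m:ℝ) ≤ (j:ℝ) * (j:ℝ) := mul_le_mul_of_nonneg_left hmj (le_of_lt hjR)
    nlinarith
  have key : -(1:ℝ) * (j:ℝ)^3 / (T:ℝ)^2 ≤ -((j:ℝ) * (m:ℝ)) / (T:ℝ)^2 := by
    rw [div_le_div_iff₀ (by positivity) (by positivity)]
    have := mul_le_mul_of_nonneg_right hjm3 (sq_nonneg (T:ℝ))
    linarith
  calc -(1:ℝ) * (j:ℝ)^3 / (T:ℝ)^2 ≤ -((j:ℝ) * (m:ℝ)) / (T:ℝ)^2 := key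
    _ = (j:ℝ) * y ^ m * (1/T) - (j:ℝ)/T * (y ^ m + (m:ℝ) * (1/T)) := by
        field_simp
        ring
    _ ≤ x ^ j - y ^ j
        - (j : ℝ) * (∏ s ∈ Finset.Icc 1 (j - 1), ((t : ℝ) - (s : ℝ)))
            / (∏ s ∈ Finset.Icc 1 j, ((T : ℝ) + 1 - (s : ℝ))) := by linarith
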